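/- For real numbers β ≥ γ ≥ 0 with β + γ > 1, 0 < γ, and real numbers k₁, k₂, the integral over τ ∈ ℝ of 1/(⟨τ - k₁⟩^β ⟨τ - k₂⟩^γ) dτ is bounded by a constant (depending only on β, γ) times ⟨k₁ - k₂⟩^{-γ} φ_β(k₁ - k₂), where φ_β(k) = 1 if β > 1, φ_β(k) = log(1 + ⟨k⟩) if β = 1, and φ_β(k) = ⟨k⟩^{1-β} if β < 1. -/

import Mathlib

open Real MeasureTheory

/-- Japanese bracket. -/
noncomputable def jb (x : ℝ) : ℝ := Real.sqrt (1 + x ^ 2)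

/-- The function `φ_β`. -/
noncomputable def phi (β : ℝ) (k : ℝ) : ℝ :=
  if 1 < β then 1 else if β = 1 then Real.log (1 + jb k) else jb k ^ (1 - β)

open Set

lemma jb_pos (x : ℝ) : 0 < jb x := Real.sqrt_pos.2 (by positivity)
lemma one_le_jb (x : ℝ) : 1 ≤ jb x := by
  have h := Real.sqrt_le_sqrt (show (1:ℝ) ≤ 1 + x^2 by nlinarith [sq_nonneg x])
  rw [Real.sqrt_one] at h
  exact h
lemma abs_le_jb (x : ℝ) : |x| ≤ jb x := by
  rw [jb, ← Real.sqrt_sq_eq_abs]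
  exact Real.sqrt_le_sqrt (by nlinarith)
lemma jb_neg (x : ℝ) : jb (-x) = jb x := by simp [jb]
lemma jb_mono {x y : ℝ} (h : |x| ≤ |y|) : jb x ≤ jb y := by
  apply Real.sqrt_le_sqrt
  nlinarith [abs_nonneg x, sq_abs x, sq_abs y]
lemma jb_le_two_mul {x y : ℝ} (h : |x| ≤ 2 * |y|) : jb x ≤ 2 * jb y := by
  have h2 : (2:ℝ) * jb y = Real.sqrt (4 * (1 + y^2)) := by
    rw [jb, Real.sqrt_mul (by norm_num), show (4:ℝ) = 2^2 by norm_num, Real.sqrt_sq (by norm_num)]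
  rw [jb, h2]
  apply Real.sqrt_le_sqrt
  nlinarith [abs_nonneg x, sq_abs x, sq_abs y, abs_nonneg y]
lemma jb_le_sqrt_two_mul_abs {x : ℝ} (h : 1 ≤ |x|) : jb x ≤ Real.sqrt 2 * |x| := by
  have h2 : Real.sqrt 2 * |x| = Real.sqrt (2 * x^2) := by
    rw [Real.sqrt_mul (by norm_num), Real.sqrt_sq_eq_abs]
  rw [jb, h2]
  apply Real.sqrt_le_sqrt
  nlinarith [sq_abs x]
lemma continuous_jb : Continuous jb := by
  apply Real.continuous_sqrt.comp; continuity
lemma jb_rpow_le_one {q : ℝ} (hq : 0 ≤ q) (x : ℝ) : jb x ^ (-q) ≤ 1 :=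
  Real.rpow_le_one_of_one_le_of_nonpos (one_le_jb x) (by linarith)

lemma continuous_jb_rpow (q : ℝ) : Continuous (fun x : ℝ => jb x ^ (-q)) :=
  continuous_jb.rpow_const (fun x => Or.inl (jb_pos x).ne')

lemma jb_rpow_eq (x q : ℝ) : jb x ^ q = (1 + x ^ 2) ^ (q / 2) := by
  rw [jb, Real.sqrt_eq_rpow, ← Real.rpow_mul (by positivity), one_div, inv_mul_eq_div]

lemma integrable_jb_rpow {p : ℝ} (hp : 1 < p) : Integrable (fun x : ℝ => jb x ^ (-p)) := by
  have h := integrable_rpow_neg_one_add_norm_sq (E := ℝ) (μ := volume)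
    (r := p) (by simpa using hp)
  refine h.congr (Filter.Eventually.of_forall fun x => ?_)
  simp only [jb_rpow_eq, Real.norm_eq_abs, sq_abs, neg_div]

lemma jb_rpow_anti {q x y : ℝ} (hq : 0 ≤ q) (h : jb x ≤ jb y) : jb y ^ (-q) ≤ jb x ^ (-q) :=
  Real.rpow_le_rpow_of_nonpos (jb_pos x) h (by linarith)

-- global pointwise bound
lemma f_le_sum {β γ : ℝ} (hβ : 0 ≤ β) (hγ : 0 ≤ γ) (k σ : ℝ) :
    jb σ ^ (-β) * jb (σ - k) ^ (-γ)
      ≤ jb σ ^ (-(β + γ)) + jb (σ - k) ^ (-(β + γ)) := by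
  rcases le_total (jb σ) (jb (σ - k)) with hc | hc
  · have h1 : jb (σ - k) ^ (-γ) ≤ jb σ ^ (-γ) := jb_rpow_anti hγ hc
    have h2 : jb σ ^ (-β) * jb (σ - k) ^ (-γ) ≤ jb σ ^ (-β) * jb σ ^ (-γ) :=
      mul_le_mul_of_nonneg_left h1 (Real.rpow_nonneg (jb_pos σ).le _)
    rw [← Real.rpow_add (jb_pos σ)] at h2
    have : -β + -γ = -(β + γ) := by ring
    rw [this] at h2
    exact h2.trans (le_add_of_nonneg_right (Real.rpow_nonneg (jb_pos _).le _))
  · have h1 : jb σ ^ (-β) ≤ jb (σ - k) ^ (-β) := jb_rpow_anti hβ hc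
    have h2 : jb σ ^ (-β) * jb (σ - k) ^ (-γ) ≤ jb (σ - k) ^ (-β) * jb (σ - k) ^ (-γ) :=
      mul_le_mul_of_nonneg_right h1 (Real.rpow_nonneg (jb_pos _).le _)
    rw [← Real.rpow_add (jb_pos _)] at h2
    have : -β + -γ = -(β + γ) := by ring
    rw [this] at h2
    exact h2.trans (le_add_of_nonneg_left (Real.rpow_nonneg (jb_pos _).le _))

lemma mid_le_gen {q M : ℝ} (hq0 : 0 ≤ q) (hM : 1 ≤ M) :
    ∫ x in Icc (-M) M, jb x ^ (-q) ≤ 2 + 2 * ∫ x in (1:ℝ)..M, x ^ (-q) := by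
  have hg : Continuous (fun x : ℝ => jb x ^ (-q)) := continuous_jb_rpow q
  have hii : ∀ a b : ℝ, IntervalIntegrable (fun x : ℝ => jb x ^ (-q)) volume a b :=
    fun a b => hg.intervalIntegrable a b
  have h1 : ∫ x in Icc (-M) M, jb x ^ (-q) = ∫ x in (-M)..M, jb x ^ (-q) := by
    rw [intervalIntegral.integral_of_le (by linarith), integral_Icc_eq_integral_Ioc]
  have h2 : ∫ x in (-M)..M, jb x ^ (-q)
      = (∫ x in (-M)..(-1:ℝ), jb x ^ (-q)) + ((∫ x in (-1:ℝ)..1, jb x ^ (-q))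
        + ∫ x in (1:ℝ)..M, jb x ^ (-q)) := by
    rw [intervalIntegral.integral_add_adjacent_intervals (hii (-1) 1) (hii 1 M),
      intervalIntegral.integral_add_adjacent_intervals (hii (-M) (-1)) (hii (-1) M)]
  have hneg : (∫ x in (-M)..(-1:ℝ), jb x ^ (-q)) = ∫ x in (1:ℝ)..M, jb x ^ (-q) := by
    have := intervalIntegral.integral_comp_neg (a := (1:ℝ)) (b := M)
      (f := fun x : ℝ => jb x ^ (-q))
    simp only [jb_neg] at this
    rw [← this]
  have hmid : (∫ x in (-1:ℝ)..1, jb x ^ (-q)) ≤ 2 := by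
    have := intervalIntegral.integral_mono_on (μ := volume) (by norm_num : (-1:ℝ) ≤ 1)
      (hii (-1) 1) (intervalIntegrable_const (c := (1:ℝ)))
      (fun x _ => jb_rpow_le_one hq0 x)
    norm_num at this; linarith
  have hlast : (∫ x in (1:ℝ)..M, jb x ^ (-q)) ≤ ∫ x in (1:ℝ)..M, x ^ (-q) := by
    refine intervalIntegral.integral_mono_on hM (hii 1 M) ?_ ?_
    · refine ContinuousOn.intervalIntegrable ?_
      refine ContinuousOn.rpow_const ?_ (fun x hx => Or.inl ?_)
      · exact continuousOn_id
      · rw [uIcc_of_le hM] at hx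
        have : (1:ℝ) ≤ x := hx.1
        linarith
    · intro x hx
      exact Real.rpow_le_rpow_of_nonpos (by linarith [hx.1]) ((le_abs_self x).trans (abs_le_jb x))
        (by linarith)
  rw [h1, h2, hneg]
  linarith

lemma interval_rpow_le {q M : ℝ} (hq0 : 0 ≤ q) (hq : q < 1) (hM : 1 ≤ M) :
    ∫ x in (1:ℝ)..M, x ^ (-q) ≤ M ^ (1 - q) / (1 - q) := by
  rw [integral_rpow (Or.inl (by linarith))]
  have h1 : (1:ℝ) ^ (-q + 1) = 1 := Real.one_rpow _
  rw [h1]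
  have h2 : -q + 1 = 1 - q := by ring
  rw [h2]
  have h3 : (0:ℝ) < 1 - q := by linarith
  have h4 : (1:ℝ) ≤ M ^ (1 - q) := Real.one_le_rpow hM (by linarith)
  rw [div_le_div_iff₀ h3 h3]
  nlinarith

lemma interval_inv_eval {M : ℝ} (hM : 1 ≤ M) :
    ∫ x in (1:ℝ)..M, x ^ (-(1:ℝ)) = Real.log M := by
  have : ∀ x : ℝ, x ^ (-(1:ℝ)) = 1 / x := fun x => by
    rw [Real.rpow_neg_one, one_div]
  simp only [this]
  rw [integral_one_div (by intro hx; rw [uIcc_of_le hM] at hx; linarith [hx.1])]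
  rw [div_one]

lemma tail_le {p : ℝ} (hp : 1 < p) {R : ℝ} (hR : 0 < R) :
    (∫ x in Iic (-R), jb x ^ (-p)) + (∫ x in Ici R, jb x ^ (-p))
      ≤ 2 * (R ^ (1 - p) / (p - 1)) := by
  have hint : Integrable (fun x : ℝ => jb x ^ (-p)) := integrable_jb_rpow hp
  have hIci : (∫ x in Ici R, jb x ^ (-p)) ≤ R ^ (1 - p) / (p - 1) := by
    rw [integral_Ici_eq_integral_Ioi]
    have hmono : (∫ x in Ioi R, jb x ^ (-p)) ≤ ∫ x in Ioi R, x ^ (-p) := by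
      refine setIntegral_mono_on hint.integrableOn
        (integrableOn_Ioi_rpow_of_lt (by linarith) hR) measurableSet_Ioi ?_
      intro x hx
      have hx' : R < x := hx
      exact Real.rpow_le_rpow_of_nonpos (by linarith) ((le_abs_self x).trans (abs_le_jb x))
        (by linarith)
    have heval : (∫ x in Ioi R, x ^ (-p)) = R ^ (1 - p) / (p - 1) := by
      rw [integral_Ioi_rpow_of_lt (by linarith) hR]
      rw [show -p + 1 = 1 - p by ring, neg_div, ← div_neg, neg_sub]
    linarith [hmono, heval.le, heval.ge]
  have hIic : (∫ x in Iic (-R), jb x ^ (-p)) = ∫ x in Ici R, jb x ^ (-p) := by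
    have h2 := integral_comp_neg_Iic (-R) (fun x => jb x ^ (-p))
    simp only [jb_neg, neg_neg] at h2
    rw [h2, integral_Ici_eq_integral_Ioi]
  rw [hIic]
  linarith


lemma log_two_pos' : 0 < Real.log 2 := Real.log_pos (by norm_num)

lemma log_two_le_one' : Real.log 2 ≤ 1 := by
  have := Real.log_two_lt_d9
  linarith

lemma log_two_le_phi (β k : ℝ) : Real.log 2 ≤ phi β k := by
  unfold phi
  split_ifs with h1 h2
  · exact log_two_le_one'
  · exact Real.log_le_log (by norm_num) (by linarith [one_le_jb k])
  · have hβ : β < 1 := lt_of_le_of_ne (not_lt.1 h1) h2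
    exact log_two_le_one'.trans (Real.one_le_rpow (one_le_jb k) (by linarith))

lemma phi_pos (β k : ℝ) : 0 < phi β k := lt_of_lt_of_le log_two_pos' (log_two_le_phi β k)

lemma one_le_inv_log_two : (1:ℝ) ≤ 1 / Real.log 2 := by
  rw [le_div_iff₀ log_two_pos']
  simpa using log_two_le_one'

lemma jb_rpow_one_sub_le_phi (β k : ℝ) : jb k ^ (1 - β) ≤ (1 / Real.log 2) * phi β k := by
  unfold phi
  split_ifs with h1 h2
  · have h3 : jb k ^ (1 - β) ≤ 1 :=
      Real.rpow_le_one_of_one_le_of_nonpos (one_le_jb k) (by linarith)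
    calc jb k ^ (1 - β) ≤ 1 := h3
      _ ≤ 1 / Real.log 2 * 1 := by rw [mul_one]; exact one_le_inv_log_two
  · rw [h2, sub_self, Real.rpow_zero, one_div, inv_mul_eq_div, le_div_iff₀ log_two_pos',
      one_mul]
    exact Real.log_le_log (by norm_num) (by linarith [one_le_jb k])
  · calc jb k ^ (1 - β) = 1 * jb k ^ (1 - β) := (one_mul _).symm
      _ ≤ 1 / Real.log 2 * jb k ^ (1 - β) :=
          mul_le_mul_of_nonneg_right one_le_inv_log_two (Real.rpow_nonneg (jb_pos k).le _)

lemma phi_congr {β a b : ℝ} (h : jb a = jb b) : phi β a = phi β b := by unfold phi; rw [h]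

lemma mid_phi (q : ℝ) (hq : 0 < q) :
    ∃ D > 0, ∀ k : ℝ, (∫ x in Icc (-(jb k)) (jb k), jb x ^ (-q)) ≤ D * phi q k := by
  rcases lt_trichotomy 1 q with h1 | h1 | h1
  · have hnn : (0:ℝ) ≤ ∫ x : ℝ, jb x ^ (-q) :=
      integral_nonneg (fun x => Real.rpow_nonneg (jb_pos x).le _)
    refine ⟨(∫ x : ℝ, jb x ^ (-q)) + 1, by linarith, fun k => ?_⟩
    have h2 : (∫ x in Icc (-(jb k)) (jb k), jb x ^ (-q)) ≤ ∫ x : ℝ, jb x ^ (-q) :=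
      setIntegral_le_integral (integrable_jb_rpow h1)
        (Filter.Eventually.of_forall fun x => Real.rpow_nonneg (jb_pos x).le _)
    rw [phi, if_pos h1, mul_one]
    linarith
  · refine ⟨2 / Real.log 2 + 2, by positivity, fun k => ?_⟩
    have hM : 1 ≤ jb k := one_le_jb k
    have h2 := mid_le_gen (q := q) (M := jb k) (by linarith) hM
    rw [← h1] at h2 ⊢
    rw [interval_inv_eval hM] at h2
    rw [phi, if_neg (lt_irrefl 1), if_pos rfl]
    have h3 : Real.log 2 ≤ Real.log (1 + jb k) :=
      Real.log_le_log (by norm_num) (by linarith)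
    have h4 : Real.log (jb k) ≤ Real.log (1 + jb k) :=
      Real.log_le_log (jb_pos k) (by linarith)
    have h5 : 2 ≤ 2 / Real.log 2 * Real.log (1 + jb k) := by
      rw [div_mul_eq_mul_div, le_div_iff₀ log_two_pos']
      nlinarith [log_two_pos']
    nlinarith [log_two_pos']
  · have h5' : (0:ℝ) < 1 - q := by linarith
    have h5'' : 0 < 2 / (1-q) := by positivity
    refine ⟨2 + 2 / (1 - q), by linarith, fun k => ?_⟩
    have hM : 1 ≤ jb k := one_le_jb k
    have h2 := mid_le_gen (q := q) (M := jb k) hq.le hM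
    have h3 := interval_rpow_le hq.le h1 hM
    rw [phi, if_neg (by linarith), if_neg (by linarith)]
    have h4 : (1:ℝ) ≤ jb k ^ (1 - q) := Real.one_le_rpow hM (by linarith)
    have h5 : (0:ℝ) < 1 - q := by linarith
    have h6 : 2 * (jb k ^ (1 - q) / (1 - q)) = 2 / (1 - q) * jb k ^ (1 - q) := by
      field_simp
    nlinarith [h2, h3, h4]

lemma compare_lemma {β γ : ℝ} (hβγ : γ ≤ β) (hγ : 0 < γ) :
    ∃ E > 0, ∀ k : ℝ, jb k ^ (-β) * phi γ k ≤ E * (jb k ^ (-γ) * phi β k) := by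
  have hjm : ∀ k : ℝ, jb k ^ (-β) ≤ jb k ^ (-γ) :=
    fun k => Real.rpow_le_rpow_of_exponent_le (one_le_jb k) (by linarith)
  rcases lt_trichotomy 1 γ with h1 | h1 | h1
  · -- γ > 1, hence β > 1
    refine ⟨1, one_pos, fun k => ?_⟩
    rw [phi, if_pos h1, phi, if_pos (lt_of_lt_of_le h1 hβγ), mul_one, mul_one, one_mul]
    exact hjm k
  · -- γ = 1
    rcases eq_or_lt_of_le hβγ with hb | hb
    · refine ⟨1, one_pos, fun k => ?_⟩
      rw [← hb, one_mul]
    · -- β > 1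
      have hβ1 : 1 < β := by rw [h1]; exact hb
      have hb1 : (0:ℝ) < β - 1 := by linarith
      refine ⟨2 ^ (β - 1) / (β - 1), by positivity, fun k => ?_⟩
      rw [phi, if_neg (by rw [← h1]; exact lt_irrefl 1), if_pos h1.symm,
        phi, if_pos hβ1, mul_one]
      set M := jb k with hM
      have hM1 : 1 ≤ M := one_le_jb k
      have hlog : Real.log (1 + M) ≤ (2 * M) ^ (β - 1) / (β - 1) := by
        refine (Real.log_le_rpow_div (by linarith) (by linarith : 0 < β - 1)).trans ?_
        refine div_le_div_of_nonneg_right ?_ (by linarith)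
        exact Real.rpow_le_rpow (by linarith) (by linarith) (by linarith)
      have h2M : (2 * M) ^ (β - 1) = 2 ^ (β - 1) * M ^ (β - 1) :=
        Real.mul_rpow (by norm_num) (by linarith)
      have hMul : M ^ (-β) * M ^ (β - 1) = M ^ (-(1:ℝ)) := by
        rw [← Real.rpow_add (jb_pos k), show -β + (β - 1) = -(1:ℝ) by ring]
      have hpos : 0 ≤ M ^ (-β) := Real.rpow_nonneg (jb_pos k).le _
      calc M ^ (-β) * Real.log (1 + M) ≤ M ^ (-β) * ((2*M) ^ (β-1) / (β-1)) :=
            mul_le_mul_of_nonneg_left hlog hpos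
        _ = 2 ^ (β-1) / (β-1) * (M ^ (-β) * M ^ (β-1)) := by rw [h2M]; ring
        _ = 2 ^ (β-1) / (β-1) * M ^ (-(1:ℝ)) := by rw [hMul]
        _ = 2 ^ (β-1) / (β-1) * M ^ (-γ) := by rw [← h1]
  · -- γ < 1
    refine ⟨1 / Real.log 2, by positivity, fun k => ?_⟩
    rw [phi, if_neg (by linarith), if_neg (by linarith)]
    set M := jb k with hM
    have hMpos : 0 < M := jb_pos k
    have key : M ^ (-β) * M ^ (1 - γ) = M ^ (1 - β) * M ^ (-γ) := by
      rw [← Real.rpow_add hMpos, ← Real.rpow_add hMpos]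
      ring_nf
    calc M ^ (-β) * M ^ (1 - γ) = M ^ (1 - β) * M ^ (-γ) := key
      _ ≤ (1 / Real.log 2 * phi β k) * M ^ (-γ) :=
          mul_le_mul_of_nonneg_right (jb_rpow_one_sub_le_phi β k)
            (Real.rpow_nonneg hMpos.le _)
      _ = 1 / Real.log 2 * (M ^ (-γ) * phi β k) := by ring

lemma setIntegral_translate (g : ℝ → ℝ) (k : ℝ) (A : Set ℝ) (hA : MeasurableSet A) :
    ∫ σ in {x : ℝ | x - k ∈ A}, g (σ - k) = ∫ u in A, g u := by
  have hA' : MeasurableSet {x : ℝ | x - k ∈ A} := (measurable_id.sub_const k) hA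
  rw [← integral_indicator hA, ← integral_indicator hA']
  have hpt : ∀ σ : ℝ, ({x : ℝ | x - k ∈ A}.indicator (fun σ => g (σ - k)) σ)
      = A.indicator g (σ - k) := by
    intro σ
    by_cases hm : σ - k ∈ A
    · rw [Set.indicator_of_mem hm, Set.indicator_of_mem (by exact hm)]
    · rw [Set.indicator_of_notMem hm, Set.indicator_of_notMem (by exact hm)]
  simp_rw [hpt]
  exact integral_sub_right_eq_self (A.indicator g) k

lemma master_large {β γ : ℝ} (hβγ : γ ≤ β) (hγ : 0 < γ) (h : 1 < β + γ) :
    ∃ C > 0, ∀ k : ℝ, 1 ≤ |k| →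
      (∫ σ : ℝ, jb σ ^ (-β) * jb (σ - k) ^ (-γ)) ≤ C * (jb k ^ (-γ) * phi β k) := by
  have hβ : 0 < β := lt_of_lt_of_le hγ hβγ
  obtain ⟨Dβ, hDβ, hmidβ⟩ := mid_phi β hβ
  obtain ⟨Dγ, hDγ, hmidγ⟩ := mid_phi γ hγ
  obtain ⟨E, hE, hcomp⟩ := compare_lemma hβγ hγ
  have hp1 : (0:ℝ) < β + γ - 1 := by linarith
  have hs2 : (0:ℝ) < Real.sqrt 2 := by positivity
  have hc1 : (0:ℝ) < 2 ^ γ * Dβ := by positivity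
  have hc2 : (0:ℝ) < 2 ^ β * Dγ * E := by positivity
  have hc3 : (0:ℝ) < 4 * (2 * Real.sqrt 2) ^ (β + γ - 1) / ((β + γ - 1) * Real.log 2) := by
    have h2 : (0:ℝ) < (2 * Real.sqrt 2) ^ (β + γ - 1) := Real.rpow_pos_of_pos (by positivity) _
    have h3 : (0:ℝ) < (β + γ - 1) * Real.log 2 := mul_pos hp1 log_two_pos'
    positivity
  refine ⟨2 ^ γ * Dβ + 2 ^ β * Dγ * E
      + 4 * (2 * Real.sqrt 2) ^ (β + γ - 1) / ((β + γ - 1) * Real.log 2),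
    by linarith, fun k hk => ?_⟩
  set R := |k| / 2 with hRdef
  set M := jb k with hMdef
  have hR : (0:ℝ) < R := by rw [hRdef]; linarith
  have hM1 : 1 ≤ M := one_le_jb k
  have hMpos : (0:ℝ) < M := jb_pos k
  have hRM : R ≤ M := by
    have := abs_le_jb k
    rw [hRdef, hMdef]; linarith [abs_nonneg k]
  set f := fun σ : ℝ => jb σ ^ (-β) * jb (σ - k) ^ (-γ) with hfdef
  set g₁ := fun σ : ℝ => jb σ ^ (-(β + γ)) with hg₁def
  set g₂ := fun σ : ℝ => jb (σ - k) ^ (-(β + γ)) with hg₂def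
  set h₁ := fun σ : ℝ => 2 ^ γ * M ^ (-γ) * jb σ ^ (-β) with hh₁def
  set h₂ := fun σ : ℝ => 2 ^ β * M ^ (-β) * jb (σ - k) ^ (-γ) with hh₂def
  have hfnn : ∀ σ, 0 ≤ f σ := fun σ =>
    mul_nonneg (Real.rpow_nonneg (jb_pos _).le _) (Real.rpow_nonneg (jb_pos _).le _)
  have hg₁nn : ∀ σ, 0 ≤ g₁ σ := fun σ => Real.rpow_nonneg (jb_pos _).le _
  have hg₂nn : ∀ σ, 0 ≤ g₂ σ := fun σ => Real.rpow_nonneg (jb_pos _).le _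
  have hh₁nn : ∀ σ, 0 ≤ h₁ σ := fun σ =>
    mul_nonneg (mul_nonneg (Real.rpow_nonneg (by norm_num) _)
      (Real.rpow_nonneg hMpos.le _)) (Real.rpow_nonneg (jb_pos _).le _)
  have hh₂nn : ∀ σ, 0 ≤ h₂ σ := fun σ =>
    mul_nonneg (mul_nonneg (Real.rpow_nonneg (by norm_num) _)
      (Real.rpow_nonneg hMpos.le _)) (Real.rpow_nonneg (jb_pos _).le _)
  have hS₁m : MeasurableSet (Icc (-R) R) := measurableSet_Icc
  have hS₂m : MeasurableSet (Icc (k - R) (k + R)) := measurableSet_Icc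
  have hS₃m : MeasurableSet (Icc (-R) R ∪ Icc (k - R) (k + R))ᶜ := (hS₁m.union hS₂m).compl
  -- pointwise bound
  have hfpt : ∀ σ, f σ ≤ (Icc (-R) R).indicator h₁ σ + (Icc (k - R) (k + R)).indicator h₂ σ
      + ((Icc (-R) R ∪ Icc (k - R) (k + R))ᶜ).indicator (fun σ => g₁ σ + g₂ σ) σ := by
    intro σ
    have hi₁ : 0 ≤ (Icc (-R) R).indicator h₁ σ := Set.indicator_nonneg (fun x _ => hh₁nn x) σ
    have hi₂ : 0 ≤ (Icc (k - R) (k + R)).indicator h₂ σ :=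
      Set.indicator_nonneg (fun x _ => hh₂nn x) σ
    have hi₃ : 0 ≤ ((Icc (-R) R ∪ Icc (k - R) (k + R))ᶜ).indicator (fun σ => g₁ σ + g₂ σ) σ :=
      Set.indicator_nonneg (fun x _ => add_nonneg (hg₁nn x) (hg₂nn x)) σ
    have htri : |k| ≤ |σ| + |σ - k| := by
      have h0 := abs_add_le σ (k - σ)
      rw [show σ + (k - σ) = k by ring, abs_sub_comm k σ] at h0
      linarith
    by_cases hσ1 : σ ∈ Icc (-R) R
    · have habs : |σ| ≤ R := abs_le.2 ⟨hσ1.1, hσ1.2⟩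
      have hkk : |k| ≤ 2 * |σ - k| := by rw [hRdef] at habs; linarith
      have hjb : M ≤ 2 * jb (σ - k) := by rw [hMdef]; exact jb_le_two_mul hkk
      have hfac : jb (σ - k) ^ (-γ) ≤ 2 ^ γ * M ^ (-γ) := by
        have h2' : M / 2 ≤ jb (σ - k) := by linarith
        have h3' := Real.rpow_le_rpow_of_nonpos (by positivity : (0:ℝ) < M / 2) h2'
          (by linarith : -γ ≤ 0)
        have h4' : (M / 2) ^ (-γ) = 2 ^ γ * M ^ (-γ) := by
          rw [Real.div_rpow hMpos.le (by norm_num : (0:ℝ) ≤ 2),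
            Real.rpow_neg (by norm_num : (0:ℝ) ≤ 2), div_eq_mul_inv, inv_inv, mul_comm]
        rw [h4'] at h3'; exact h3'
      have hfh : f σ ≤ h₁ σ := by
        have h5' := mul_le_mul_of_nonneg_left hfac (Real.rpow_nonneg (jb_pos σ).le (-β))
        calc f σ = jb σ ^ (-β) * jb (σ - k) ^ (-γ) := rfl
          _ ≤ jb σ ^ (-β) * (2 ^ γ * M ^ (-γ)) := h5'
          _ = h₁ σ := by simp only [hh₁def]; ring
      rw [Set.indicator_of_mem hσ1 h₁] at hi₁ ⊢
      linarith
    · by_cases hσ2 : σ ∈ Icc (k - R) (k + R)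
      · have habs : |σ - k| ≤ R := abs_le.2 ⟨by linarith [hσ2.1], by linarith [hσ2.2]⟩
        have hkk : |k| ≤ 2 * |σ| := by rw [hRdef] at habs; linarith
        have hjb : M ≤ 2 * jb σ := by rw [hMdef]; exact jb_le_two_mul hkk
        have hfac : jb σ ^ (-β) ≤ 2 ^ β * M ^ (-β) := by
          have h2' : M / 2 ≤ jb σ := by linarith
          have h3' := Real.rpow_le_rpow_of_nonpos (by positivity : (0:ℝ) < M / 2) h2'
            (by linarith : -β ≤ 0)
          have h4' : (M / 2) ^ (-β) = 2 ^ β * M ^ (-β) := by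
            rw [Real.div_rpow hMpos.le (by norm_num : (0:ℝ) ≤ 2),
              Real.rpow_neg (by norm_num : (0:ℝ) ≤ 2), div_eq_mul_inv, inv_inv, mul_comm]
          rw [h4'] at h3'; exact h3'
        have hfh : f σ ≤ h₂ σ := by
          have h5' := mul_le_mul_of_nonneg_right hfac
            (Real.rpow_nonneg (jb_pos (σ - k)).le (-γ))
          calc f σ = jb σ ^ (-β) * jb (σ - k) ^ (-γ) := rfl
            _ ≤ 2 ^ β * M ^ (-β) * jb (σ - k) ^ (-γ) := h5'
            _ = h₂ σ := rfl
        rw [Set.indicator_of_mem hσ2 h₂] at hi₂ ⊢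
        linarith
      · have hσ3 : σ ∈ (Icc (-R) R ∪ Icc (k - R) (k + R))ᶜ := by
          intro hmem
          rcases hmem with hm | hm
          · exact hσ1 hm
          · exact hσ2 hm
        rw [Set.indicator_of_mem hσ3]
        have hfg : f σ ≤ g₁ σ + g₂ σ := f_le_sum hβ.le hγ.le k σ
        linarith
  -- integrability
  have hg₁int : Integrable g₁ := integrable_jb_rpow (by linarith)
  have hg₂int : Integrable g₂ := hg₁int.comp_sub_right k
  have hfc : Continuous f := (continuous_jb_rpow β).mul
    ((continuous_jb_rpow γ).comp (continuous_sub_right k))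
  have hfint : Integrable f := by
    refine (hg₁int.add hg₂int).mono' hfc.aestronglyMeasurable ?_
    refine Filter.Eventually.of_forall (fun σ => ?_)
    rw [Real.norm_eq_abs, abs_of_nonneg (hfnn σ)]
    exact f_le_sum hβ.le hγ.le k σ
  have hh₁c : Continuous h₁ := continuous_const.mul (continuous_jb_rpow β)
  have hh₂c : Continuous h₂ := continuous_const.mul
    ((continuous_jb_rpow γ).comp (continuous_sub_right k))
  have ih₁ : Integrable ((Icc (-R) R).indicator h₁) :=
    (hh₁c.integrableOn_Icc).integrable_indicator hS₁m
  have ih₂ : Integrable ((Icc (k - R) (k + R)).indicator h₂) :=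
    (hh₂c.integrableOn_Icc).integrable_indicator hS₂m
  have ih₃ : Integrable (((Icc (-R) R ∪ Icc (k - R) (k + R))ᶜ).indicator
      (fun σ => g₁ σ + g₂ σ)) :=
    ((hg₁int.add hg₂int).integrableOn).integrable_indicator hS₃m
  -- step 1: split the integral
  have step1 : (∫ σ : ℝ, f σ) ≤ (∫ σ in Icc (-R) R, h₁ σ)
      + (∫ σ in Icc (k - R) (k + R), h₂ σ)
      + ∫ σ in (Icc (-R) R ∪ Icc (k - R) (k + R))ᶜ, (g₁ σ + g₂ σ) := by
    have e0 : (∫ σ : ℝ, ((Icc (-R) R).indicator h₁ σ + (Icc (k - R) (k + R)).indicator h₂ σ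
        + ((Icc (-R) R ∪ Icc (k - R) (k + R))ᶜ).indicator (fun σ => g₁ σ + g₂ σ) σ))
        = (∫ σ : ℝ, (Icc (-R) R).indicator h₁ σ)
          + (∫ σ : ℝ, (Icc (k - R) (k + R)).indicator h₂ σ)
          + ∫ σ : ℝ, ((Icc (-R) R ∪ Icc (k - R) (k + R))ᶜ).indicator
              (fun σ => g₁ σ + g₂ σ) σ := by
      have ihsum : Integrable (fun σ : ℝ => (Icc (-R) R).indicator h₁ σ
          + (Icc (k - R) (k + R)).indicator h₂ σ) := ih₁.add ih₂
      have ih₃' : Integrable (fun σ : ℝ => ((Icc (-R) R ∪ Icc (k - R) (k + R))ᶜ).indicator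
          (fun σ => g₁ σ + g₂ σ) σ) := ih₃
      have ih₁' : Integrable (fun σ : ℝ => (Icc (-R) R).indicator h₁ σ) := ih₁
      have ih₂' : Integrable (fun σ : ℝ => (Icc (k - R) (k + R)).indicator h₂ σ) := ih₂
      rw [integral_add ihsum ih₃', integral_add ih₁' ih₂']
    have hI : (∫ σ : ℝ, f σ) ≤ ∫ σ : ℝ, ((Icc (-R) R).indicator h₁ σ
        + (Icc (k - R) (k + R)).indicator h₂ σ
        + ((Icc (-R) R ∪ Icc (k - R) (k + R))ᶜ).indicator (fun σ => g₁ σ + g₂ σ) σ) :=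
      integral_mono hfint ((ih₁.add ih₂).add ih₃) hfpt
    rw [e0, integral_indicator hS₁m, integral_indicator hS₂m, integral_indicator hS₃m] at hI
    exact hI
  -- piece 1
  have hmidβk := hmidβ k
  have hmidγk := hmidγ k
  have hcompk := hcomp k
  have hphik := jb_rpow_one_sub_le_phi β k
  rw [← hMdef] at hmidβk hmidγk hcompk hphik
  have hφnn : 0 ≤ phi β k := (phi_pos β k).le
  have hXnn : 0 ≤ M ^ (-γ) * phi β k := mul_nonneg (Real.rpow_nonneg hMpos.le _) hφnn
  have piece1 : (∫ σ in Icc (-R) R, h₁ σ) ≤ 2 ^ γ * Dβ * (M ^ (-γ) * phi β k) := by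
    have hmono : (∫ σ in Icc (-R) R, jb σ ^ (-β)) ≤ ∫ σ in Icc (-M) M, jb σ ^ (-β) := by
      refine setIntegral_mono_set ((continuous_jb_rpow β).integrableOn_Icc) ?_ ?_
      · exact Filter.Eventually.of_forall (fun x => Real.rpow_nonneg (jb_pos x).le _)
      · exact HasSubset.Subset.eventuallyLE (Icc_subset_Icc (by linarith) hRM)
    have heq : (∫ σ in Icc (-R) R, h₁ σ)
        = 2 ^ γ * M ^ (-γ) * ∫ σ in Icc (-R) R, jb σ ^ (-β) := by
      simp only [hh₁def]
      exact integral_const_mul _ _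
    rw [heq]
    have hcnn : (0:ℝ) ≤ 2 ^ γ * M ^ (-γ) :=
      mul_nonneg (Real.rpow_nonneg (by norm_num) _) (Real.rpow_nonneg hMpos.le _)
    calc 2 ^ γ * M ^ (-γ) * ∫ σ in Icc (-R) R, jb σ ^ (-β)
        ≤ 2 ^ γ * M ^ (-γ) * (Dβ * phi β k) :=
          mul_le_mul_of_nonneg_left (hmono.trans hmidβk) hcnn
      _ = 2 ^ γ * Dβ * (M ^ (-γ) * phi β k) := by ring
  -- piece 2
  have piece2 : (∫ σ in Icc (k - R) (k + R), h₂ σ)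
      ≤ 2 ^ β * Dγ * E * (M ^ (-γ) * phi β k) := by
    have hseq : {x : ℝ | x - k ∈ Icc (-R) R} = Icc (k - R) (k + R) := by
      ext x
      simp only [mem_setOf_eq, mem_Icc]
      constructor <;> (intro hx; constructor <;> linarith [hx.1, hx.2])
    have htr : (∫ σ in Icc (k - R) (k + R), jb (σ - k) ^ (-γ))
        = ∫ u in Icc (-R) R, jb u ^ (-γ) := by
      rw [← hseq]
      exact setIntegral_translate (fun u => jb u ^ (-γ)) k _ measurableSet_Icc
    have hmono : (∫ u in Icc (-R) R, jb u ^ (-γ)) ≤ ∫ u in Icc (-M) M, jb u ^ (-γ) := by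
      refine setIntegral_mono_set ((continuous_jb_rpow γ).integrableOn_Icc) ?_ ?_
      · exact Filter.Eventually.of_forall (fun x => Real.rpow_nonneg (jb_pos x).le _)
      · exact HasSubset.Subset.eventuallyLE (Icc_subset_Icc (by linarith) hRM)
    have heq : (∫ σ in Icc (k - R) (k + R), h₂ σ)
        = 2 ^ β * M ^ (-β) * ∫ σ in Icc (k - R) (k + R), jb (σ - k) ^ (-γ) := by
      simp only [hh₂def]
      exact integral_const_mul _ _
    rw [heq, htr]
    have hcnn : (0:ℝ) ≤ 2 ^ β := Real.rpow_nonneg (by norm_num) _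
    have hMβnn : (0:ℝ) ≤ M ^ (-β) := Real.rpow_nonneg hMpos.le _
    calc 2 ^ β * M ^ (-β) * ∫ u in Icc (-R) R, jb u ^ (-γ)
        ≤ 2 ^ β * M ^ (-β) * (Dγ * phi γ k) := by
          refine mul_le_mul_of_nonneg_left (hmono.trans hmidγk) (mul_nonneg hcnn hMβnn)
      _ = 2 ^ β * Dγ * (M ^ (-β) * phi γ k) := by ring
      _ ≤ 2 ^ β * Dγ * (E * (M ^ (-γ) * phi β k)) := by
          refine mul_le_mul_of_nonneg_left hcompk (by positivity)
      _ = 2 ^ β * Dγ * E * (M ^ (-γ) * phi β k) := by ring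
  -- piece 3
  have piece3 : (∫ σ in (Icc (-R) R ∪ Icc (k - R) (k + R))ᶜ, (g₁ σ + g₂ σ))
      ≤ 4 * (2 * Real.sqrt 2) ^ (β + γ - 1) / ((β + γ - 1) * Real.log 2)
        * (M ^ (-γ) * phi β k) := by
    have hsub1 : (Icc (-R) R ∪ Icc (k - R) (k + R))ᶜ ⊆ Iic (-R) ∪ Ici R := by
      intro σ hσ
      have h1 : σ ∉ Icc (-R) R := fun hmem => hσ (Or.inl hmem)
      rw [mem_Icc, not_and_or, not_le, not_le] at h1
      rcases h1 with h' | h'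
      · exact Or.inl (le_of_lt h')
      · exact Or.inr (le_of_lt h')
    have hsub2 : (Icc (-R) R ∪ Icc (k - R) (k + R))ᶜ ⊆ Iic (k - R) ∪ Ici (k + R) := by
      intro σ hσ
      have h1 : σ ∉ Icc (k - R) (k + R) := fun hmem => hσ (Or.inr hmem)
      rw [mem_Icc, not_and_or, not_le, not_le] at h1
      rcases h1 with h' | h'
      · exact Or.inl (le_of_lt h')
      · exact Or.inr (le_of_lt h')
    have hdisj : Disjoint (Iic (-R)) (Ici R) := by
      refine Set.disjoint_left.2 fun x hx1 hx2 => ?_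
      simp only [mem_Iic] at hx1
      simp only [mem_Ici] at hx2
      linarith
    have hdisj2 : Disjoint (Iic (k - R)) (Ici (k + R)) := by
      refine Set.disjoint_left.2 fun x hx1 hx2 => ?_
      simp only [mem_Iic] at hx1
      simp only [mem_Ici] at hx2
      linarith
    have hsplit : (∫ σ in (Icc (-R) R ∪ Icc (k - R) (k + R))ᶜ, (g₁ σ + g₂ σ))
        = (∫ σ in (Icc (-R) R ∪ Icc (k - R) (k + R))ᶜ, g₁ σ)
          + ∫ σ in (Icc (-R) R ∪ Icc (k - R) (k + R))ᶜ, g₂ σ :=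
      integral_add hg₁int.integrableOn hg₂int.integrableOn
    have hb1 : (∫ σ in (Icc (-R) R ∪ Icc (k - R) (k + R))ᶜ, g₁ σ)
        ≤ (∫ σ in Iic (-R), g₁ σ) + ∫ σ in Ici R, g₁ σ := by
      have hm : (∫ σ in (Icc (-R) R ∪ Icc (k - R) (k + R))ᶜ, g₁ σ)
          ≤ ∫ σ in Iic (-R) ∪ Ici R, g₁ σ := by
        refine setIntegral_mono_set hg₁int.integrableOn ?_ ?_
        · exact Filter.Eventually.of_forall (fun x => hg₁nn x)
        · exact HasSubset.Subset.eventuallyLE hsub1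
      rw [setIntegral_union hdisj measurableSet_Ici hg₁int.integrableOn
        hg₁int.integrableOn] at hm
      exact hm
    have htail1 : (∫ σ in Iic (-R), g₁ σ) + (∫ σ in Ici R, g₁ σ)
        ≤ 2 * (R ^ (1 - (β + γ)) / (β + γ - 1)) := by
      exact tail_le (p := β + γ) (by linarith) hR
    have hb2 : (∫ σ in (Icc (-R) R ∪ Icc (k - R) (k + R))ᶜ, g₂ σ)
        ≤ (∫ σ in Iic (-R), g₁ σ) + ∫ σ in Ici R, g₁ σ := by
      have hm : (∫ σ in (Icc (-R) R ∪ Icc (k - R) (k + R))ᶜ, g₂ σ)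
          ≤ ∫ σ in Iic (k - R) ∪ Ici (k + R), g₂ σ := by
        refine setIntegral_mono_set hg₂int.integrableOn ?_ ?_
        · exact Filter.Eventually.of_forall (fun x => hg₂nn x)
        · exact HasSubset.Subset.eventuallyLE hsub2
      rw [setIntegral_union hdisj2 measurableSet_Ici hg₂int.integrableOn
        hg₂int.integrableOn] at hm
      have ht1 : (∫ σ in Iic (k - R), g₂ σ) = ∫ σ in Iic (-R), g₁ σ := by
        have hseq : {x : ℝ | x - k ∈ Iic (-R)} = Iic (k - R) := by
          ext x
          simp only [mem_setOf_eq, mem_Iic]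
          constructor <;> intro hx <;> linarith
        rw [← hseq]
        exact setIntegral_translate (fun u => jb u ^ (-(β + γ))) k _ measurableSet_Iic
      have ht2 : (∫ σ in Ici (k + R), g₂ σ) = ∫ σ in Ici R, g₁ σ := by
        have hseq : {x : ℝ | x - k ∈ Ici R} = Ici (k + R) := by
          ext x
          simp only [mem_setOf_eq, mem_Ici]
          constructor <;> intro hx <;> linarith
        rw [← hseq]
        exact setIntegral_translate (fun u => jb u ^ (-(β + γ))) k _ measurableSet_Ici
      rw [ht1, ht2] at hm
      exact hm
    -- bound R ^ (1 - (β+γ))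
    have hRb : R ^ (1 - (β + γ)) ≤ (2 * Real.sqrt 2) ^ (β + γ - 1)
        * ((1 / Real.log 2) * (M ^ (-γ) * phi β k)) := by
      have hM2 : M ≤ Real.sqrt 2 * |k| := by
        rw [hMdef]; exact jb_le_sqrt_two_mul_abs hk
      have ha : M / (2 * Real.sqrt 2) ≤ R := by
        have h1 : M / (2 * Real.sqrt 2) ≤ Real.sqrt 2 * |k| / (2 * Real.sqrt 2) :=
          div_le_div_of_nonneg_right hM2 (by positivity)
        have h2 : Real.sqrt 2 * |k| / (2 * Real.sqrt 2) = |k| / 2 := by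
          rw [mul_comm (2:ℝ) (Real.sqrt 2), mul_div_mul_left _ _ hs2.ne']
        rw [h2] at h1
        rw [hRdef]
        exact h1
      have hb := Real.rpow_le_rpow_of_nonpos
        (by positivity : (0:ℝ) < M / (2 * Real.sqrt 2)) ha
        (by linarith : 1 - (β + γ) ≤ 0)
      have hc : (M / (2 * Real.sqrt 2)) ^ (1 - (β + γ))
          = M ^ (-(β + γ - 1)) * (2 * Real.sqrt 2) ^ (β + γ - 1) := by
        rw [Real.div_rpow hMpos.le (by positivity : (0:ℝ) ≤ 2 * Real.sqrt 2),
          show (1:ℝ) - (β + γ) = -(β + γ - 1) by ring,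
          Real.rpow_neg (by positivity : (0:ℝ) ≤ 2 * Real.sqrt 2),
          div_eq_mul_inv, inv_inv]
      have hd : M ^ (-(β + γ - 1)) = M ^ (-γ) * M ^ (1 - β) := by
        rw [← Real.rpow_add hMpos]; congr 1; ring
      have hfin : M ^ (-(β + γ - 1)) * (2 * Real.sqrt 2) ^ (β + γ - 1)
          ≤ (2 * Real.sqrt 2) ^ (β + γ - 1)
            * ((1 / Real.log 2) * (M ^ (-γ) * phi β k)) := by
        rw [hd]
        have hsn : (0:ℝ) ≤ (2 * Real.sqrt 2) ^ (β + γ - 1) :=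
          Real.rpow_nonneg (by positivity) _
        have hMγ : (0:ℝ) ≤ M ^ (-γ) := Real.rpow_nonneg hMpos.le _
        calc M ^ (-γ) * M ^ (1 - β) * (2 * Real.sqrt 2) ^ (β + γ - 1)
            ≤ M ^ (-γ) * ((1 / Real.log 2) * phi β k)
              * (2 * Real.sqrt 2) ^ (β + γ - 1) :=
              mul_le_mul_of_nonneg_right (mul_le_mul_of_nonneg_left hphik hMγ) hsn
          _ = (2 * Real.sqrt 2) ^ (β + γ - 1)
              * ((1 / Real.log 2) * (M ^ (-γ) * phi β k)) := by ring
      rw [hc] at hb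
      exact hb.trans hfin
    have hsum : (∫ σ in (Icc (-R) R ∪ Icc (k - R) (k + R))ᶜ, (g₁ σ + g₂ σ))
        ≤ 4 * (R ^ (1 - (β + γ)) / (β + γ - 1)) := by
      rw [hsplit]; linarith [hb1, hb2, htail1]
    refine hsum.trans ?_
    have hLne : Real.log 2 ≠ 0 := log_two_pos'.ne'
    have hp1ne : β + γ - 1 ≠ 0 := hp1.ne'
    have heq2 : 4 * (2 * Real.sqrt 2) ^ (β + γ - 1) / ((β + γ - 1) * Real.log 2)
          * (M ^ (-γ) * phi β k)
        = 4 * ((2 * Real.sqrt 2) ^ (β + γ - 1)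
            * ((1 / Real.log 2) * (M ^ (-γ) * phi β k))) / (β + γ - 1) := by
      field_simp
    rw [heq2, mul_div_assoc]
    have h4 : R ^ (1 - (β + γ)) / (β + γ - 1)
        ≤ ((2 * Real.sqrt 2) ^ (β + γ - 1)
            * ((1 / Real.log 2) * (M ^ (-γ) * phi β k))) / (β + γ - 1) :=
      div_le_div_of_nonneg_right hRb hp1.le
    rw [mul_div_assoc] at h4 ⊢
    exact mul_le_mul_of_nonneg_left h4 (by norm_num)
  -- final combination
  rw [add_mul, add_mul]
  linarith [step1, piece1, piece2, piece3]
lemma master_small {β γ : ℝ} (hβγ : γ ≤ β) (hγ : 0 < γ) (h : 1 < β + γ) :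
    ∃ C > 0, ∀ k : ℝ, |k| ≤ 1 →
      (∫ σ : ℝ, jb σ ^ (-β) * jb (σ - k) ^ (-γ)) ≤ C * (jb k ^ (-γ) * phi β k) := by
  have hβ : 0 < β := lt_of_lt_of_le hγ hβγ
  have hA : (0:ℝ) ≤ ∫ x : ℝ, jb x ^ (-(β + γ)) :=
    integral_nonneg (fun x => Real.rpow_nonneg (jb_pos x).le _)
  set A := ∫ x : ℝ, jb x ^ (-(β + γ)) with hAdef
  refine ⟨(2 * A + 1) * 2 ^ γ / Real.log 2, by positivity, fun k hk => ?_⟩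
  have hg₁int : Integrable (fun σ : ℝ => jb σ ^ (-(β + γ))) :=
    integrable_jb_rpow (by linarith)
  have hg₂int : Integrable (fun σ : ℝ => jb (σ - k) ^ (-(β + γ))) :=
    hg₁int.comp_sub_right k
  have hfc : Continuous (fun σ : ℝ => jb σ ^ (-β) * jb (σ - k) ^ (-γ)) :=
    (continuous_jb_rpow β).mul ((continuous_jb_rpow γ).comp (continuous_sub_right k))
  have hfint : Integrable (fun σ : ℝ => jb σ ^ (-β) * jb (σ - k) ^ (-γ)) := by
    refine (hg₁int.add hg₂int).mono' hfc.aestronglyMeasurable ?_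
    refine Filter.Eventually.of_forall (fun σ => ?_)
    rw [Real.norm_eq_abs, abs_of_nonneg (mul_nonneg (Real.rpow_nonneg (jb_pos _).le _)
      (Real.rpow_nonneg (jb_pos _).le _))]
    exact f_le_sum hβ.le hγ.le k σ
  have h1 : (∫ σ : ℝ, jb σ ^ (-β) * jb (σ - k) ^ (-γ)) ≤ 2 * A := by
    have h2 : (∫ σ : ℝ, jb σ ^ (-β) * jb (σ - k) ^ (-γ))
        ≤ ∫ σ : ℝ, (jb σ ^ (-(β + γ)) + jb (σ - k) ^ (-(β + γ))) :=
      integral_mono hfint (hg₁int.add hg₂int) (fun σ => f_le_sum hβ.le hγ.le k σ)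
    have h3 : (∫ σ : ℝ, (jb σ ^ (-(β + γ)) + jb (σ - k) ^ (-(β + γ))))
        = (∫ σ : ℝ, jb σ ^ (-(β + γ))) + ∫ σ : ℝ, jb (σ - k) ^ (-(β + γ)) :=
      integral_add hg₁int hg₂int
    have h4 : (∫ σ : ℝ, jb (σ - k) ^ (-(β + γ))) = A :=
      integral_sub_right_eq_self (fun u => jb u ^ (-(β + γ))) k
    rw [h3, h4, ← hAdef] at h2
    linarith
  -- lower bound on RHS
  have hjk : jb k ≤ 2 := by
    have h5 : jb k ≤ jb 1 := jb_mono (by simpa using hk)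
    have h6 : jb 1 ≤ 2 := by
      rw [jb]
      have h7 : Real.sqrt (1 + 1 ^ 2) ≤ Real.sqrt 4 := Real.sqrt_le_sqrt (by norm_num)
      rwa [show Real.sqrt 4 = 2 by
        rw [show (4:ℝ) = 2 ^ 2 by norm_num, Real.sqrt_sq (by norm_num)]] at h7
    linarith
  have hlow : 2 ^ (-γ) * Real.log 2 ≤ jb k ^ (-γ) * phi β k := by
    have h7 : (2:ℝ) ^ (-γ) ≤ jb k ^ (-γ) :=
      Real.rpow_le_rpow_of_nonpos (jb_pos k) hjk (by linarith)
    have h8 : Real.log 2 ≤ phi β k := log_two_le_phi β k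
    have h9 : (0:ℝ) ≤ 2 ^ (-γ) := Real.rpow_nonneg (by norm_num) _
    nlinarith [log_two_pos', Real.rpow_nonneg (jb_pos k).le (-γ)]
  have h2γ : (2:ℝ) ^ γ * 2 ^ (-γ) = 1 := by
    rw [← Real.rpow_add (by norm_num : (0:ℝ) < 2)]
    norm_num
  have hkey : (2 * A + 1) * 2 ^ γ / Real.log 2 * (2 ^ (-γ) * Real.log 2) = 2 * A + 1 := by
    field_simp
    linear_combination h2γ
  calc (∫ σ : ℝ, jb σ ^ (-β) * jb (σ - k) ^ (-γ)) ≤ 2 * A := h1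
    _ ≤ (2 * A + 1) * 2 ^ γ / Real.log 2 * (2 ^ (-γ) * Real.log 2) := by
        rw [hkey]; linarith
    _ ≤ (2 * A + 1) * 2 ^ γ / Real.log 2 * (jb k ^ (-γ) * phi β k) := by
        refine mul_le_mul_of_nonneg_left hlow (by positivity)

lemma master {β γ : ℝ} (hβγ : γ ≤ β) (hγ : 0 < γ) (h : 1 < β + γ) :
    ∃ C > 0, ∀ k : ℝ,
      (∫ σ : ℝ, jb σ ^ (-β) * jb (σ - k) ^ (-γ)) ≤ C * (jb k ^ (-γ) * phi β k) := by
  obtain ⟨C₁, hC₁, hb₁⟩ := master_small hβγ hγ h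
  obtain ⟨C₂, hC₂, hb₂⟩ := master_large hβγ hγ h
  refine ⟨max C₁ C₂, lt_max_of_lt_left hC₁, fun k => ?_⟩
  have hXnn : (0:ℝ) ≤ jb k ^ (-γ) * phi β k :=
    mul_nonneg (Real.rpow_nonneg (jb_pos k).le _) (phi_pos β k).le
  rcases le_total |k| 1 with hk | hk
  · exact (hb₁ k hk).trans (mul_le_mul_of_nonneg_right (le_max_left _ _) hXnn)
  · exact (hb₂ k hk).trans (mul_le_mul_of_nonneg_right (le_max_right _ _) hXnn)

/-- continuous convolution estimate for Japanese brackets. -/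
theorem stmt_1 (β γ : ℝ) (hβγ : γ ≤ β) (hγ : 0 < γ) (h : 1 < β + γ) :
    ∃ C > 0, ∀ k₁ k₂ : ℝ,
      ∫ τ : ℝ, 1 / (jb (τ - k₁) ^ β * jb (τ - k₂) ^ γ)
        ≤ C * jb (k₁ - k₂) ^ (-γ) * phi β (k₁ - k₂) := by
  obtain ⟨C, hC, hb⟩ := master hβγ hγ h
  refine ⟨C, hC, fun k₁ k₂ => ?_⟩
  have hrw : (∫ τ : ℝ, 1 / (jb (τ - k₁) ^ β * jb (τ - k₂) ^ γ))
      = ∫ τ : ℝ, jb (τ - k₁) ^ (-β) * jb (τ - k₂) ^ (-γ) := by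
    congr 1
    funext τ
    rw [Real.rpow_neg (jb_pos _).le, Real.rpow_neg (jb_pos _).le, one_div, mul_inv]
  have htrans : (∫ τ : ℝ, jb (τ - k₁) ^ (-β) * jb (τ - k₂) ^ (-γ))
      = ∫ x : ℝ, jb x ^ (-β) * jb (x - (k₂ - k₁)) ^ (-γ) := by
    rw [← integral_sub_right_eq_self
      (fun x => jb x ^ (-β) * jb (x - (k₂ - k₁)) ^ (-γ)) k₁]
    congr 1
    funext τ
    rw [show τ - k₁ - (k₂ - k₁) = τ - k₂ by ring]
  have hjb : jb (k₁ - k₂) = jb (k₂ - k₁) := by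
    rw [show k₁ - k₂ = -(k₂ - k₁) by ring, jb_neg]
  have hphi : phi β (k₁ - k₂) = phi β (k₂ - k₁) := phi_congr hjb
  rw [hrw, htrans, hjb, hphi, mul_assoc]
  exact hb (k₂ - k₁)
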